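/- For the infinite well in the GUP framework, the GUP correction to the energy, $E_n - \varepsilon_n \approx \frac{4}{3}\beta m \varepsilon_n^2 = \frac{n^4\pi^4\hbar^2}{mL^2}\cdot\frac{1}{3}\left(\frac{\hbar\sqrt{\beta}}{L}\right)^2$, is of second order in $\delta = \hbar\sqrt{\beta}/L$, whereas the energy uncertainty from wall-position uncertainty, $\Delta E_n = |d\varepsilon_n/dL|\,\hbar\sqrt{\beta} = \frac{n^2\pi^2\hbar^2}{mL^2}\delta$, is of first order in $\delta$; hence for fixed $n$, $\lim_{\delta \to 0^+} \frac{E_n - \varepsilon_n}{\Delta E_n} = 0$. -/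

import Mathlib

lemma tan_le_cubic {x : ℝ} (hx : 0 < x) (hx2 : x ≤ 1/2) :
    Real.tan x ≤ x + x ^ 3 := by
  have hc : 1 - x ^ 2 / 2 < Real.cos x := Real.one_sub_sq_div_two_lt_cos (ne_of_gt hx)
  have hcpos : (0:ℝ) < 1 - x ^ 2 / 2 := by nlinarith
  have hs : Real.sin x < x := Real.sin_lt hx
  have htan : Real.tan x = Real.sin x / Real.cos x := Real.tan_eq_sin_div_cos x
  have h1 : Real.tan x ≤ x / (1 - x ^ 2 / 2) := by
    rw [htan]
    exact div_le_div₀ hx.le hs.le hcpos hc.le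
  have h2 : x / (1 - x ^ 2 / 2) ≤ x + x ^ 3 := by
    rw [div_le_iff₀ hcpos]
    nlinarith [mul_nonneg (pow_pos hx 3).le (show (0:ℝ) ≤ 1 - x^2 by nlinarith)]
  linarith

lemma tan_sq_sub_le {x : ℝ} (hx : 0 < x) (hx2 : x ≤ 1/2) :
    Real.tan x ^ 2 - x ^ 2 ≤ 3 * x ^ 4 := by
  have h1 := tan_le_cubic hx hx2
  have h0 : 0 ≤ Real.tan x := by
    have := Real.lt_tan hx (by nlinarith [Real.pi_gt_three])
    linarith
  have h2 : Real.tan x ^ 2 ≤ (x + x ^ 3) ^ 2 := by nlinarith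
  nlinarith [mul_nonneg (pow_pos hx 4).le (show (0:ℝ) ≤ 1 - x^2 by nlinarith)]

theorem gup_box_correction_vs_wall_uncertainty (hbar m L : ℝ) (n : ℕ)
    (hhbar : 0 < hbar) (hm : 0 < m) (hL : 0 < L) (hn : 0 < n) :
    let ε : ℝ := (n : ℝ) ^ 2 * Real.pi ^ 2 * hbar ^ 2 / (2 * m * L ^ 2)
    -- with δ = ħ√β/L, i.e. √β = δ L / ħ:
    let E : ℝ → ℝ := fun δ =>
      Real.tan ((n : ℝ) * Real.pi * δ) ^ 2 / (2 * m * (δ * L / hbar) ^ 2)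
    let ΔE : ℝ → ℝ := fun δ => (n : ℝ) ^ 2 * Real.pi ^ 2 * hbar ^ 2 / (m * L ^ 2) * δ
    (∀ δ : ℝ, (4 / 3) * (δ * L / hbar) ^ 2 * m * ε ^ 2 =
        (n : ℝ) ^ 4 * Real.pi ^ 4 * hbar ^ 2 / (m * L ^ 2) * ((1 : ℝ) / 3) * δ ^ 2) ∧
    Filter.Tendsto (fun δ : ℝ => (E δ - ε) / ΔE δ)
      (nhdsWithin 0 (Set.Ioi 0)) (nhds 0) := by
  intro ε E ΔE
  have hπ : 0 < Real.pi := Real.pi_pos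
  have hnR : (0:ℝ) < (n:ℝ) := by exact_mod_cast hn
  set a : ℝ := (n:ℝ) * Real.pi with ha
  have hapos : 0 < a := mul_pos hnR hπ
  have key : ∀ δ : ℝ, 0 < δ →
      (E δ - ε) / ΔE δ = (Real.tan (a*δ)^2 - (a*δ)^2) / (2 * a^2 * δ^3) := by
    intro δ hδ0
    show (Real.tan ((n : ℝ) * Real.pi * δ) ^ 2 / (2 * m * (δ * L / hbar) ^ 2) -
      (n : ℝ) ^ 2 * Real.pi ^ 2 * hbar ^ 2 / (2 * m * L ^ 2)) /
      ((n : ℝ) ^ 2 * Real.pi ^ 2 * hbar ^ 2 / (m * L ^ 2) * δ) = _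
    rw [← ha]
    have hane : a ≠ 0 := hapos.ne'
    field_simp
    ring
  constructor
  · intro δ
    simp only [ε]
    field_simp
    ring
  · have hmem : Set.Ioo (0:ℝ) (1/(2*a)) ∈ nhdsWithin (0:ℝ) (Set.Ioi 0) :=
      Ioo_mem_nhdsGT_of_mem ⟨le_refl 0, by positivity⟩
    apply squeeze_zero' (g := fun δ => (3/2) * a ^ 2 * δ)
    · filter_upwards [hmem] with δ hδ
      obtain ⟨hδ0, hδ1⟩ := hδ
      have hx : 0 < a * δ := mul_pos hapos hδ0
      have hx2 : a * δ < 1/2 := by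
        have h := (mul_lt_mul_iff_right₀ hapos).mpr hδ1
        rwa [mul_one_div, mul_comm 2 a, ← div_div, div_self hapos.ne'] at h
      have hxh : a * δ < Real.pi / 2 := by nlinarith [Real.pi_gt_three]
      have htge : a * δ < Real.tan (a * δ) := Real.lt_tan hx hxh
      have hnum : 0 ≤ Real.tan (a * δ) ^ 2 - (a * δ) ^ 2 := by nlinarith
      rw [key δ hδ0]
      have hden : 0 < 2 * a^2 * δ^3 := by positivity
      exact div_nonneg hnum hden.le
    · filter_upwards [hmem] with δ hδ
      obtain ⟨hδ0, hδ1⟩ := hδ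
      have hx : 0 < a * δ := mul_pos hapos hδ0
      have hx2 : a * δ < 1/2 := by
        have h := (mul_lt_mul_iff_right₀ hapos).mpr hδ1
        rwa [mul_one_div, mul_comm 2 a, ← div_div, div_self hapos.ne'] at h
      have hbound := tan_sq_sub_le hx hx2.le
      rw [key δ hδ0, div_le_iff₀ (by positivity)]
      calc Real.tan (a*δ)^2 - (a*δ)^2 ≤ 3 * (a*δ)^4 := hbound
        _ = 3/2 * a^2 * δ * (2 * a^2 * δ^3) := by ring
    · have h : Filter.Tendsto (fun δ : ℝ => (3/2) * a ^ 2 * δ) (nhds 0) (nhds 0) := by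
        simpa using (continuous_id.tendsto (0:ℝ)).const_mul ((3/2) * a ^ 2)
      exact h.mono_left nhdsWithin_le_nhds
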